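/- arXiv:1909.13189 — 3 statements merged into one kernel-verified Lean document; each statement's English description precedes it below -/
import Mathlib

section
/- Let μ be a Borel measure on ℝ^d that assigns positive measure to every nonempty open set, let f : ℝ^d → ℝ be continuously differentiable (C¹), and let k ∈ {1,…,d}. Then ∫ (∂ₖ f(x))² dμ(x) = 0 if and only if f is independent of coordinate k. -/
open MeasureTheory

/-- `f` is independent of coordinate `k`. -/
def IndepCoord {d : ℕ} {α : Type*} (f : (Fin d → ℝ) → α) (k : Fin d) : Prop :=
  ∀ (x : Fin d → ℝ) (a b : ℝ), f (Function.update x k a) = f (Function.update x k b)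

lemma myHasDerivAt_update {d : ℕ} (x : Fin d → ℝ) (k : Fin d) (t : ℝ) :
    HasDerivAt (fun t : ℝ => Function.update x k t) (Pi.single k 1) t := by
  have h : (fun t : ℝ => Function.update x k t)
      = fun t : ℝ => x + (t - x k) • (Pi.single k 1 : Fin d → ℝ) := by
    funext t
    funext i
    by_cases hi : i = k
    · subst hi; simp
    · simp [Function.update_of_ne hi, Pi.single, Function.update_of_ne hi]
  rw [h]
  have : HasDerivAt (fun t : ℝ => (t - x k)) 1 t :=
    ((hasDerivAt_id t).sub_const (x k))
  simpa using (this.smul_const (Pi.single k 1 : Fin d → ℝ)).const_add x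

/-- For a C¹ function `f : ℝ^d → ℝ` and a Borel measure `μ` that is positive on nonempty open
sets, `∫ (∂ₖ f)² dμ = 0` if and only if `f` is independent of coordinate `k`. -/
theorem integral_sq_partialDeriv_eq_zero_iff_indepCoord (d : ℕ)
    (μ : Measure (Fin d → ℝ)) [μ.IsOpenPosMeasure]
    (f : (Fin d → ℝ) → ℝ) (hf : ContDiff ℝ 1 f) (k : Fin d) :
    (∫⁻ x, ENNReal.ofReal ((fderiv ℝ f x (Pi.single k 1)) ^ 2) ∂μ) = 0 ↔
      IndepCoord f k := by
  have hdiff : Differentiable ℝ f := hf.differentiable one_ne_zero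
  have hcont : Continuous fun x => fderiv ℝ f x (Pi.single k 1) := by
    have : Continuous fun x => fderiv ℝ f x := (hf.fderiv_right (m := 0) le_rfl).continuous
    exact (this.clm_apply continuous_const)
  constructor
  · intro h0
    -- from lintegral zero to everywhere zero
    have hcont2 : Continuous fun x => ENNReal.ofReal ((fderiv ℝ f x (Pi.single k 1)) ^ 2) :=
      ENNReal.continuous_ofReal.comp ((hcont.pow 2))
    have hmeas : Measurable fun x => ENNReal.ofReal ((fderiv ℝ f x (Pi.single k 1)) ^ 2) :=
      hcont2.measurable
    have hae := (lintegral_eq_zero_iff hmeas).mp h0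
    have heq : (fun x => ENNReal.ofReal ((fderiv ℝ f x (Pi.single k 1)) ^ 2)) = fun _ => 0 :=
      (hcont2.ae_eq_iff_eq μ continuous_const).mp hae
    have hzero : ∀ x, fderiv ℝ f x (Pi.single k 1) = 0 := by
      intro x
      have := congrFun heq x
      simp only [ENNReal.ofReal_eq_zero] at this
      nlinarith [sq_nonneg (fderiv ℝ f x (Pi.single k 1))]
    intro x a b
    have hconst : ∀ t : ℝ, HasDerivAt (fun t => f (Function.update x k t)) 0 t := by
      intro t
      have h1 := (hdiff (Function.update x k t)).hasFDerivAt.comp_hasDerivAt t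
        (myHasDerivAt_update x k t)
      simp [hzero] at h1
      exact h1
    have : ∀ a b : ℝ, f (Function.update x k a) = f (Function.update x k b) := by
      intro a b
      have := is_const_of_deriv_eq_zero (f := fun t => f (Function.update x k t))
        (fun t => (hconst t).differentiableAt) (fun t => (hconst t).deriv) a b
      exact this
    exact this a b
  · intro hind
    have hzero : ∀ x, fderiv ℝ f x (Pi.single k 1) = 0 := by
      intro x
      have hupd : Function.update x k (x k) = x := Function.update_eq_self k x
      have hconst : (fun t : ℝ => f (Function.update x k t)) = fun _ => f x := by
        funext t
        rw [hind x t (x k), hupd]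
      have h1 : HasDerivAt (fun t : ℝ => f (Function.update x k t))
          (fderiv ℝ f x (Pi.single k 1)) (x k) := by
        have := (hdiff (Function.update x k (x k))).hasFDerivAt.comp_hasDerivAt (x k)
          (myHasDerivAt_update x k (x k))
        simp [hupd] at this
        exact this
      have h2 : HasDerivAt (fun _ : ℝ => f x) (0 : ℝ) (x k) := hasDerivAt_const _ _
      rw [hconst] at h1
      exact h1.unique h2
    simp [hzero]
end

section
/- Let A be a d × d real matrix with all entries nonnegative, and define the binary relation r on {1,…,d} by r(i,j) if and only if A_{ij} ≠ 0. Then trace(exp(A)) = d if and only if the directed graph of r has no directed cycle, i.e., there is no index i with (i,i) in the transitive closure of r. Moreover, trace(exp(A)) ≥ d always holds. -/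
open Matrix NormedSpace

lemma pow_entry_nonneg {d : ℕ} (A : Matrix (Fin d) (Fin d) ℝ)
    (hA : ∀ i j, 0 ≤ A i j) : ∀ n i j, 0 ≤ (A ^ n) i j := by
  intro n
  induction n with
  | zero => intro i j; simp [Matrix.one_apply]; positivity
  | succ n ih =>
    intro i j
    rw [pow_succ, Matrix.mul_apply]
    exact Finset.sum_nonneg fun k _ => mul_nonneg (ih i k) (hA k j)

lemma pow_ne_zero_transGen {d : ℕ} (A : Matrix (Fin d) (Fin d) ℝ) :
    ∀ n i j, (A ^ (n + 1)) i j ≠ 0 →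
      Relation.TransGen (fun i j : Fin d => A i j ≠ 0) i j := by
  intro n
  induction n with
  | zero => intro i j h; rw [pow_one] at h; exact Relation.TransGen.single h
  | succ n ih =>
    intro i j h
    rw [pow_succ', Matrix.mul_apply] at h
    obtain ⟨k, _, hk⟩ := Finset.exists_ne_zero_of_sum_ne_zero h
    have h1 : A i k ≠ 0 := fun h0 => hk (by rw [h0, zero_mul])
    have h2 : (A ^ (n + 1)) k j ≠ 0 := fun h0 => hk (by rw [h0, mul_zero])
    exact Relation.TransGen.head h1 (ih k j h2)

lemma transGen_pow_ne_zero {d : ℕ} (A : Matrix (Fin d) (Fin d) ℝ)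
    (hA : ∀ i j, 0 ≤ A i j) {i j : Fin d}
    (h : Relation.TransGen (fun i j : Fin d => A i j ≠ 0) i j) :
    ∃ n, (A ^ (n + 1)) i j ≠ 0 := by
  induction h with
  | single h => exact ⟨0, by rwa [pow_one]⟩
  | tail _ hbc ih =>
    obtain ⟨n, hn⟩ := ih
    rename_i b c _
    refine ⟨n + 1, ?_⟩
    rw [pow_succ, Matrix.mul_apply]
    have pos : 0 < (A ^ (n + 1)) i b * A b c :=
      mul_pos ((pow_entry_nonneg A hA _ _ _).lt_of_ne (Ne.symm hn))
        ((hA b c).lt_of_ne (Ne.symm hbc))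
    have : 0 < ∑ k, (A ^ (n + 1)) i k * A k c :=
      Finset.sum_pos' (fun k _ => mul_nonneg (pow_entry_nonneg A hA _ _ _) (hA k c))
        ⟨b, Finset.mem_univ b, pos⟩
    exact this.ne'

/-- For a nonnegative `d × d` real matrix `A`, `trace (exp A) = d` if and only if the support
digraph of `A` (edge `i → j` iff `A i j ≠ 0`) has no directed cycle; moreover
`trace (exp A) ≥ d` always holds. -/
theorem trace_exp_eq_dim_iff_acyclic (d : ℕ) (A : Matrix (Fin d) (Fin d) ℝ)
    (hA : ∀ i j, 0 ≤ A i j) :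
    ((NormedSpace.exp A).trace = d ↔
        ∀ i : Fin d, ¬ Relation.TransGen (fun i j : Fin d => A i j ≠ 0) i i) ∧
      (d : ℝ) ≤ (NormedSpace.exp A).trace := by
  letI : SeminormedRing (Matrix (Fin d) (Fin d) ℝ) := Matrix.linftyOpSemiNormedRing
  letI : NormedRing (Matrix (Fin d) (Fin d) ℝ) := Matrix.linftyOpNormedRing
  letI : NormedAlgebra ℝ (Matrix (Fin d) (Fin d) ℝ) := Matrix.linftyOpNormedAlgebra
  set f : ℕ → ℝ := fun n => ((n.factorial : ℝ)⁻¹) * (A ^ n).trace with hf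
  have htr : ∀ n, 0 ≤ (A ^ n).trace := fun n =>
    Finset.sum_nonneg fun i _ => pow_entry_nonneg A hA n i i
  have hfnonneg : ∀ n, 0 ≤ f n := fun n =>
    mul_nonneg (by positivity) (htr n)
  have hf0 : f 0 = d := by
    simp [hf, Matrix.trace_one]
  have trCont : Continuous (Matrix.trace : Matrix (Fin d) (Fin d) ℝ → ℝ) := by
    exact LinearMap.continuous_of_finiteDimensional
      (Matrix.traceLinearMap (Fin d) ℝ ℝ)
  have hsum : HasSum f (NormedSpace.exp A).trace := by
    have h1 := exp_series_hasSum_exp' (𝕂 := ℝ) A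
    have h2 := h1.map (Matrix.traceLinearMap (Fin d) ℝ ℝ) trCont
    convert h2 using 1
    funext n
    simp [hf, Function.comp, Matrix.trace_smul, smul_eq_mul]
    rfl
  have hS : Summable f := hsum.summable
  have hge : (d : ℝ) ≤ (NormedSpace.exp A).trace := by
    calc (d : ℝ) = f 0 := hf0.symm
    _ ≤ ∑' n, f n := Summable.le_tsum hS 0 fun n _ => hfnonneg n
    _ = (NormedSpace.exp A).trace := hsum.tsum_eq
  refine ⟨⟨fun heq i hcyc => ?_, fun hacyc => ?_⟩, hge⟩
  · -- equality implies acyclic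
    obtain ⟨n, hn⟩ := transGen_pow_ne_zero A hA hcyc
    have hfn : f (n + 1) ≠ 0 := by
      have htrn : (A ^ (n + 1)).trace ≠ 0 := by
        have : 0 < (A ^ (n + 1)).trace := by
          have hle : (A ^ (n + 1)) i i ≤ (A ^ (n + 1)).trace :=
            Finset.single_le_sum (fun k _ => pow_entry_nonneg A hA _ k k) (Finset.mem_univ i)
          exact lt_of_lt_of_le ((pow_entry_nonneg A hA _ i i).lt_of_ne (Ne.symm hn)) hle
        exact this.ne'
      exact mul_ne_zero (by positivity) htrn
    have hfn_pos : 0 < f (n + 1) := (hfnonneg _).lt_of_ne (Ne.symm hfn)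
    have : f 0 + f (n + 1) ≤ ∑' m, f m := by
      have := Summable.sum_le_tsum ({0, n + 1} : Finset ℕ) (fun m _ => hfnonneg m) hS
      rwa [Finset.sum_pair ((Nat.succ_ne_zero n).symm)] at this
    rw [hsum.tsum_eq, heq, hf0] at this
    linarith
  · -- acyclic implies equality
    have hzero : ∀ n, n ≠ 0 → f n = 0 := by
      rintro (_ | n) hn
      · exact absurd rfl hn
      · have : (A ^ (n + 1)).trace = 0 := by
          apply Finset.sum_eq_zero
          intro i _
          by_contra h
          exact hacyc i (pow_ne_zero_transGen A n i i h)
        simp [hf, this]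
    rw [← hsum.tsum_eq, tsum_eq_single 0 (fun n hn => hzero n hn), hf0]
end

section
/- Let μ be a Borel measure on ℝ^d that assigns positive measure to every nonempty open set, and for each j ∈ {1,…,d} let f_j : ℝ^d → ℝ be continuously differentiable (C¹) with ∂ₖ f_j square-integrable with respect to μ for every k. Define the d × d matrix W(f) by [W(f)]_{kj} = (∫ (∂ₖ f_j(x))² dμ(x))^{1/2}, and let W(f) ∘ W(f) denote its entrywise square. Then trace(exp(W(f) ∘ W(f))) = d if and only if the directed graph G(f), which has an edge from k to j exactly when f_j is NOT independent of coordinate k, has no directed cycle (no vertex j with (j,j) in the transitive closure of the edge relation). -/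
open MeasureTheory Matrix NormedSpace

/-- General combinatorial/analytic fact: for a matrix with nonnegative entries,
`trace (exp M) = d` iff the graph of nonzero entries has no directed cycle. -/
lemma trace_exp_eq_card_iff {d : ℕ} (M : Matrix (Fin d) (Fin d) ℝ)
    (hM : ∀ k j, 0 ≤ M k j) :
    (NormedSpace.exp M).trace = d ↔
      ∀ j, ¬ Relation.TransGen (fun k j => M k j ≠ 0) j j := by
  classical
  set C : ℝ := ∑ k, ∑ j, M k j with hCdef
  have hC0 : 0 ≤ C := Finset.sum_nonneg fun k _ => Finset.sum_nonneg fun j _ => hM k j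
  have hCb : ∀ k j, M k j ≤ C := by
    intro k j
    calc M k j ≤ ∑ j', M k j' :=
          Finset.single_le_sum (fun i _ => hM k i) (Finset.mem_univ j)
      _ ≤ C := Finset.single_le_sum
          (fun i _ => Finset.sum_nonneg fun j' _ => hM i j') (Finset.mem_univ k)
  have hpow0 : ∀ (n : ℕ) (k j : Fin d), 0 ≤ (M ^ n) k j := by
    intro n
    induction n with
    | zero =>
        intro k j
        rw [pow_zero]
        by_cases h : k = j <;> simp [Matrix.one_apply, h]
    | succ n ih =>
        intro k j
        rw [pow_succ, Matrix.mul_apply]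
        exact Finset.sum_nonneg fun m _ => mul_nonneg (ih k m) (hM m j)
  have hpowle : ∀ (n : ℕ) (k j : Fin d), (M ^ n) k j ≤ ((d : ℝ) * C) ^ n := by
    intro n
    induction n with
    | zero =>
        intro k j
        rw [pow_zero]
        by_cases h : k = j <;> simp [Matrix.one_apply, h]
    | succ n ih =>
        intro k j
        rw [pow_succ, Matrix.mul_apply]
        have hdC : 0 ≤ ((d : ℝ) * C) ^ n :=
          pow_nonneg (mul_nonneg (Nat.cast_nonneg d) hC0) n
        calc ∑ m, (M ^ n) k m * M m j
            ≤ ∑ _m : Fin d, ((d : ℝ) * C) ^ n * C :=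
              Finset.sum_le_sum fun m _ =>
                mul_le_mul (ih k m) (hCb m j) (hM m j) hdC
          _ = ((d : ℝ) * C) ^ (n + 1) := by
              simp [Finset.sum_const, Finset.card_univ, pow_succ]
              ring
  have hentry : ∀ k j : Fin d,
      Summable fun n : ℕ => ((n.factorial : ℝ))⁻¹ * (M ^ n) k j := by
    intro k j
    refine Summable.of_nonneg_of_le
      (fun n => mul_nonneg (inv_nonneg.2 (Nat.cast_nonneg _)) (hpow0 n k j))
      (fun n => ?_) (Real.summable_pow_div_factorial ((d : ℝ) * C))
    rw [div_eq_mul_inv, mul_comm (((d : ℝ) * C) ^ n)]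
    exact mul_le_mul_of_nonneg_left (hpowle n k j)
      (inv_nonneg.2 (Nat.cast_nonneg _))
  have hsumM : Summable fun n : ℕ => ((n.factorial : ℝ))⁻¹ • M ^ n := by
    refine Pi.summable.2 fun k => Pi.summable.2 fun j => ?_
    simpa [smul_eq_mul] using hentry k j
  have hexp : ∀ k j : Fin d, (NormedSpace.exp M) k j
      = ∑' n : ℕ, ((n.factorial : ℝ))⁻¹ * (M ^ n) k j := by
    intro k j
    rw [NormedSpace.exp_eq_tsum ℝ]
    have h1 := tsum_apply (x := k) hsumM
    have h2 := tsum_apply (x := j) (Pi.summable.1 hsumM k)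
    refine ((congrFun h1 j).trans h2).trans ?_
    rfl
  have hbsum : Summable fun n : ℕ => ((n.factorial : ℝ))⁻¹ * (M ^ n).trace := by
    have := summable_sum (s := (Finset.univ : Finset (Fin d)))
      (f := fun j (n : ℕ) => ((n.factorial : ℝ))⁻¹ * (M ^ n) j j)
      (fun j _ => hentry j j)
    refine this.congr fun n => ?_
    simp [Matrix.trace, Matrix.diag, Finset.mul_sum]
  have htr : (NormedSpace.exp M).trace
      = ∑' n : ℕ, ((n.factorial : ℝ))⁻¹ * (M ^ n).trace := by
    have h1 : (NormedSpace.exp M).trace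
        = ∑ j, ∑' n : ℕ, ((n.factorial : ℝ))⁻¹ * (M ^ n) j j := by
      rw [Matrix.trace]
      exact Finset.sum_congr rfl fun j _ => hexp j j
    rw [h1, ← Summable.tsum_finsetSum (fun j _ => hentry j j)]
    refine tsum_congr fun n => ?_
    simp [Matrix.trace, Matrix.diag, Finset.mul_sum]
  -- trace of each positive power is zero iff acyclic
  have pathpos : ∀ k j : Fin d, Relation.TransGen (fun a b => M a b ≠ 0) k j →
      ∃ n : ℕ, 0 < (M ^ (n + 1)) k j := by
    intro k j h
    induction h with
    | single hr =>
        exact ⟨0, by rw [pow_one]; exact lt_of_le_of_ne (hM _ _) (Ne.symm hr)⟩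
    | @tail b c hab hbc ih =>
        obtain ⟨n, hn⟩ := ih
        refine ⟨n + 1, ?_⟩
        rw [pow_succ, Matrix.mul_apply]
        calc (0 : ℝ) < (M ^ (n + 1)) k b * M b c :=
              mul_pos hn (lt_of_le_of_ne (hM _ _) (Ne.symm hbc))
          _ ≤ ∑ m, (M ^ (n + 1)) k m * M m c :=
              Finset.single_le_sum (f := fun m => (M ^ (n + 1)) k m * M m c)
                (fun m _ => mul_nonneg (hpow0 _ _ _) (hM _ _)) (Finset.mem_univ b)
  have postopath : ∀ (n : ℕ) (k j : Fin d), (M ^ (n + 1)) k j ≠ 0 →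
      Relation.TransGen (fun a b => M a b ≠ 0) k j := by
    intro n
    induction n with
    | zero =>
        intro k j h
        rw [pow_one] at h
        exact Relation.TransGen.single h
    | succ n ih =>
        intro k j h
        rw [pow_succ, Matrix.mul_apply] at h
        obtain ⟨m, -, hm⟩ := Finset.exists_ne_zero_of_sum_ne_zero h
        rcases mul_ne_zero_iff.1 hm with ⟨h1, h2⟩
        exact (ih k m h1).tail h2
  -- put it together
  rw [htr, Summable.tsum_eq_zero_add hbsum]
  have h0 : ((Nat.factorial 0 : ℝ))⁻¹ * (M ^ 0).trace = (d : ℝ) := by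
    simp [Matrix.trace_one]
  rw [h0, add_eq_left]
  have hterm0 : ∀ n : ℕ, 0 ≤ ((((n : ℕ) + 1).factorial : ℝ))⁻¹ * (M ^ (n + 1)).trace := by
    intro n
    exact mul_nonneg (inv_nonneg.2 (Nat.cast_nonneg _))
      (Finset.sum_nonneg fun j _ => hpow0 _ j j)
  constructor
  · intro hS j hTG
    obtain ⟨n, hn⟩ := pathpos j j hTG
    have hpos : 0 < ((((n : ℕ) + 1).factorial : ℝ))⁻¹ * (M ^ (n + 1)).trace := by
      refine mul_pos (inv_pos.2 (by exact_mod_cast Nat.factorial_pos _)) ?_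
      refine lt_of_lt_of_le hn ?_
      exact Finset.single_le_sum (fun m _ => hpow0 _ m m) (Finset.mem_univ j)
    have hgsum : Summable fun n : ℕ =>
        ((((n : ℕ) + 1).factorial : ℝ))⁻¹ * (M ^ (n + 1)).trace :=
      hbsum.comp_injective (add_left_injective 1)
    exact absurd hS (Summable.tsum_pos hgsum hterm0 n hpos).ne'
  · intro h
    have hz : ∀ n : ℕ, ((((n : ℕ) + 1).factorial : ℝ))⁻¹ * (M ^ (n + 1)).trace = 0 := by
      intro n
      have htr0 : (M ^ (n + 1)).trace = 0 := by
        simp only [Matrix.trace, Matrix.diag]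
        rw [Finset.sum_eq_zero_iff_of_nonneg (fun j _ => hpow0 (n + 1) j j)]
        intro j _
        by_contra hne
        exact h j (postopath n j j hne)
      rw [htr0, mul_zero]
    calc (∑' n : ℕ, ((((n : ℕ) + 1).factorial : ℝ))⁻¹ * (M ^ (n + 1)).trace)
        = ∑' _n : ℕ, (0 : ℝ) := tsum_congr hz
      _ = 0 := tsum_zero

/-- The curve `s ↦ f (update x k s)` has derivative `∂ₖ f` along it. -/
lemma hasDerivAt_update_coord {d : ℕ} {f : (Fin d → ℝ) → ℝ} (hf : ContDiff ℝ 1 f)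
    (k : Fin d) (x : Fin d → ℝ) (t : ℝ) :
    HasDerivAt (fun s => f (Function.update x k s))
      (fderiv ℝ f (Function.update x k t) (Pi.single k 1)) t := by
  have hupd : ∀ s : ℝ,
      Function.update x k s = x + (s - x k) • (Pi.single k 1 : Fin d → ℝ) := by
    intro s; funext i
    by_cases h : i = k
    · subst h; simp
    · simp [Function.update_of_ne h, Pi.single_apply, h]
  have hu : HasDerivAt (fun s : ℝ => Function.update x k s)
      (Pi.single k 1 : Fin d → ℝ) t := by
    simp_rw [hupd]
    have h1 : HasDerivAt (fun s : ℝ => s - x k) 1 t := (hasDerivAt_id t).sub_const _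
    have h2 := h1.smul_const (Pi.single k 1 : Fin d → ℝ)
    simpa using h2.const_add x
  have hF : HasFDerivAt f (fderiv ℝ f (Function.update x k t)) (Function.update x k t) :=
    ((hf.differentiable one_ne_zero) _).hasFDerivAt
  exact hF.comp_hasDerivAt t hu

/-- Analytic characterization: the L²(μ) norm of `∂ₖ f` vanishes iff `f` is independent
of coordinate `k`. -/
lemma integral_sq_deriv_eq_zero_iff {d : ℕ} (μ : Measure (Fin d → ℝ))
    [μ.IsOpenPosMeasure] {f : (Fin d → ℝ) → ℝ} (hf : ContDiff ℝ 1 f) (k : Fin d)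
    (hint : Integrable (fun x => (fderiv ℝ f x (Pi.single k 1)) ^ 2) μ) :
    (∫ x, (fderiv ℝ f x (Pi.single k 1)) ^ 2 ∂μ) = 0 ↔ IndepCoord f k := by
  constructor
  · intro h0
    have hg : Continuous fun x => fderiv ℝ f x (Pi.single k 1) :=
      (hf.continuous_fderiv one_ne_zero).clm_apply continuous_const
    have hsq : (fun x => (fderiv ℝ f x (Pi.single k 1)) ^ 2) =ᵐ[μ] 0 :=
      (integral_eq_zero_iff_of_nonneg (fun x => sq_nonneg _) hint).1 h0
    have heq : (fun x => (fderiv ℝ f x (Pi.single k 1)) ^ 2) = 0 :=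
      ((hg.pow 2).ae_eq_iff_eq μ continuous_const).1 hsq
    have hzero : ∀ x, fderiv ℝ f x (Pi.single k 1) = 0 := by
      intro x
      have := congrFun heq x
      simpa [pow_eq_zero_iff] using this
    intro x a b
    have hdiff : Differentiable ℝ (fun s => f (Function.update x k s)) :=
      fun t => (hasDerivAt_update_coord hf k x t).differentiableAt
    refine is_const_of_deriv_eq_zero hdiff (fun t => ?_) a b
    rw [(hasDerivAt_update_coord hf k x t).deriv]
    exact hzero _
  · intro hind
    have hzero : ∀ x, fderiv ℝ f x (Pi.single k 1) = 0 := by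
      intro x
      have hconst : (fun s : ℝ => f (Function.update x k s)) = fun _ => f x := by
        funext s
        have := hind x s (x k)
        rwa [Function.update_eq_self] at this
      have h1 := hasDerivAt_update_coord hf k x (x k)
      rw [Function.update_eq_self] at h1
      have h2 : HasDerivAt (fun s : ℝ => f (Function.update x k s)) 0 (x k) := by
        rw [hconst]; exact hasDerivAt_const _ _
      exact h1.unique h2
    simp [hzero]

/-- Nonparametric acyclicity characterization: with `[W(f)]ₖⱼ = ‖∂ₖ f ⱼ‖_{L²(μ)}` for C¹
functions `f ⱼ` and an open-positive measure `μ`, `trace (exp (W(f) ∘ W(f))) = d` if and only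
if the graph with an edge `k → j` exactly when `f j` is not independent of coordinate `k` has
no directed cycle. -/
theorem trace_exp_hadamard_W_eq_dim_iff_acyclic (d : ℕ)
    (μ : Measure (Fin d → ℝ)) [μ.IsOpenPosMeasure]
    (f : Fin d → (Fin d → ℝ) → ℝ) (hf : ∀ j, ContDiff ℝ 1 (f j))
    (hint : ∀ j k, Integrable
      (fun x => (fderiv ℝ (f j) x (Pi.single k 1)) ^ 2) μ) :
    (NormedSpace.exp
        (Matrix.hadamard
          (Matrix.of fun k j : Fin d =>
            Real.sqrt (∫ x, (fderiv ℝ (f j) x (Pi.single k 1)) ^ 2 ∂μ))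
          (Matrix.of fun k j : Fin d =>
            Real.sqrt (∫ x, (fderiv ℝ (f j) x (Pi.single k 1)) ^ 2 ∂μ)))).trace = d ↔
      ∀ j : Fin d,
        ¬ Relation.TransGen (fun k j : Fin d => ¬ IndepCoord (f j) k) j j := by
  have hHad : Matrix.hadamard
      (Matrix.of fun k j : Fin d =>
        Real.sqrt (∫ x, (fderiv ℝ (f j) x (Pi.single k 1)) ^ 2 ∂μ))
      (Matrix.of fun k j : Fin d =>
        Real.sqrt (∫ x, (fderiv ℝ (f j) x (Pi.single k 1)) ^ 2 ∂μ))
      = Matrix.of fun k j : Fin d => ∫ x, (fderiv ℝ (f j) x (Pi.single k 1)) ^ 2 ∂μ := by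
    ext k j
    simp only [Matrix.hadamard_apply, Matrix.of_apply]
    exact Real.mul_self_sqrt (integral_nonneg fun x => sq_nonneg _)
  rw [hHad, trace_exp_eq_card_iff
    (Matrix.of fun k j : Fin d => ∫ x, (fderiv ℝ (f j) x (Pi.single k 1)) ^ 2 ∂μ)
    (fun k j => integral_nonneg fun x => sq_nonneg _)]
  have hrel : (fun k j : Fin d =>
      (Matrix.of fun k j : Fin d => ∫ x, (fderiv ℝ (f j) x (Pi.single k 1)) ^ 2 ∂μ) k j ≠ 0)
      = fun k j : Fin d => ¬ IndepCoord (f j) k := by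
    funext k j
    simp only [Matrix.of_apply, ne_eq]
    exact propext (not_congr (integral_sq_deriv_eq_zero_iff μ (hf j) k (hint j k)))
  rw [hrel]
end
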